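/- Let n ≥ 3, g the n-cycle (1 2 ... n) and h the reversal i ↦ n+1-i in S_n. If n ≡ 2 (mod 4), then the intersection of ⟨g,h⟩ with A_n equals the subgroup generated by g^2 and hg, and this intersection has order n. -/

import Mathlib

open Equiv Equiv.Perm
open scoped Fin.CommRing

theorem rot_mul_rev_aux (n : ℕ) : finRotate (n+2) * (Fin.revPerm : Perm (Fin (n+2))) =
    Equiv.Perm.decomposeFin.symm (0, (Fin.revPerm : Perm (Fin (n+1)))) := by
  ext i
  refine Fin.cases ?_ (fun x => ?_) i
  · simp [Perm.mul_apply]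
  · rw [Perm.mul_apply, Equiv.Perm.decomposeFin_symm_apply_succ]
    simp only [Fin.revPerm_apply, swap_self, Equiv.refl_apply, finRotate_succ_apply]
    simp only [Fin.val_add, Fin.val_one, Fin.val_succ, Fin.val_rev]
    rw [Nat.mod_eq_of_lt (by omega)]
    omega

theorem sign_revPerm_aux (n : ℕ) :
    Equiv.Perm.sign (Fin.revPerm : Perm (Fin (n+1))) = (-1) ^ ((n+1)/2) := by
  induction n with
  | zero =>
    have : (Fin.revPerm : Perm (Fin 1)) = 1 := Subsingleton.elim _ _
    rw [this]; simp
  | succ n ih =>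
    have h := rot_mul_rev_aux n
    have h2 : (Fin.revPerm : Perm (Fin (n+2))) =
        (finRotate (n+2))⁻¹ *
          Equiv.Perm.decomposeFin.symm (0, (Fin.revPerm : Perm (Fin (n+1)))) := by
      rw [← h]; group
    rw [h2, map_mul, map_inv, sign_finRotate, Equiv.Perm.decomposeFin.symm_sign, if_pos rfl,
      one_mul, ih, ← inv_pow, inv_neg, inv_one]
    obtain ⟨k, hk | hk⟩ := Nat.even_or_odd' n <;> subst hk
    · have e1 : (2*k + 1 + 1) / 2 = k + 1 := by omega
      have e2 : (2*k + 1) / 2 = k := by omega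
      rw [e1, e2, Nat.add_sub_cancel, pow_succ, pow_succ, pow_mul]
      norm_num
    · have e1 : (2*k + 1 + 1 + 1) / 2 = k + 1 := by omega
      have e2 : (2*k + 1 + 1) / 2 = k + 1 := by omega
      rw [e1, e2, Nat.add_sub_cancel, show 2*k+1+1 = 2*(k+1) by ring, pow_mul]
      norm_num

theorem rev_eq_neg_aux (n : ℕ) (i : Fin (n+1)) : Fin.rev i = -1 - i := by
  rw [← Fin.last_sub]
  congr 1
  exact eq_neg_of_add_eq_zero_left (by rw [Fin.last_add_one])

/-- For n ≡ 2 (mod 4), ⟨g,h⟩ ∩ A_n = ⟨g², hg⟩ and this intersection has order n.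
(`finRotate n * Fin.revPerm` is the map x ↦ g(h(x)), i.e. apply h then g.) -/
theorem dihedral_inf_alternating_two (n : ℕ) (hn : 3 ≤ n) (h4 : n % 4 = 2) :
    Subgroup.closure {finRotate n, (Fin.revPerm : Equiv.Perm (Fin n))}
          ⊓ alternatingGroup (Fin n)
        = Subgroup.closure {(finRotate n) ^ 2, finRotate n * Fin.revPerm} ∧
      Nat.card ↥(Subgroup.closure {finRotate n, (Fin.revPerm : Equiv.Perm (Fin n))}
          ⊓ alternatingGroup (Fin n)) = n := by
  obtain ⟨m, rfl⟩ : ∃ m, n = m + 3 := ⟨n - 3, by omega⟩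
  clear hn
  have hmodd : m % 2 = 1 := by omega
  set g : Perm (Fin (m+3)) := finRotate (m+3) with hgdef
  set h : Perm (Fin (m+3)) := Fin.revPerm with hhdef
  -- basic applications
  have gapply : ∀ x : Fin (m+3), g x = x + 1 := fun x => finRotate_succ_apply x
  have happly : ∀ x : Fin (m+3), h x = -1 - x := fun x => rev_eq_neg_aux _ x
  have gpow : ∀ (k : ℕ) (x : Fin (m+3)), (g^k) x = x + (k : Fin (m+3)) := by
    intro k
    induction k with
    | zero => intro x; simp
    | succ k ih =>
      intro x
      rw [pow_succ', Perm.mul_apply, gapply, ih]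
      push_cast
      ring
  -- h is an involution
  have hh2 : h * h = 1 := by
    ext x
    simp [Perm.mul_apply, happly]
  have hinv : h⁻¹ = h := inv_eq_of_mul_eq_one_left hh2
  have hne1 : h ≠ 1 := by
    intro e
    have : h 0 = (1 : Perm (Fin (m+3))) 0 := by rw [e]
    rw [happly, Perm.one_apply, Fin.ext_iff] at this
    rw [show (-1 - 0 : Fin (m+3)) = Fin.rev 0 from (rev_eq_neg_aux _ 0).symm] at this
    simp [Fin.val_rev] at this
  have horder : orderOf h = 2 := by
    refine orderOf_eq_prime ?_ hne1
    rw [pow_two, hh2]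
  have hpow_even : ∀ a : ℕ, a % 2 = 0 → h^a = 1 := by
    intro a ha
    obtain ⟨t, rfl⟩ : ∃ t, a = 2 * t := ⟨a/2, by omega⟩
    rw [pow_mul, pow_two, hh2, one_pow]
  have hpow_odd : ∀ a : ℕ, a % 2 = 1 → h^a = h := by
    intro a ha
    obtain ⟨t, rfl⟩ : ∃ t, a = 2 * t + 1 := ⟨a/2, by omega⟩
    rw [pow_succ, pow_mul, pow_two, hh2, one_pow, one_mul]
  have hpow_congr : ∀ a b : ℕ, a ≡ b [MOD 2] → h^a = h^b := by
    intro a b hab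
    rw [pow_eq_pow_iff_modEq, horder]
    exact hab
  -- order of g
  have gorder : orderOf g = m + 3 := by
    rw [hgdef, (isCycle_finRotate_of_le (by omega)).orderOf,
      support_finRotate_of_le (by omega), Finset.card_univ, Fintype.card_fin]
  have gn1 : g ^ (m+3) = 1 := by
    have := pow_orderOf_eq_one g
    rwa [gorder] at this
  have ginv : g⁻¹ = g^(m+2) :=
    inv_eq_of_mul_eq_one_left (by rw [← pow_succ, gn1])
  have gpow_inv : ∀ c : ℕ, (g^c)⁻¹ = g^((m+2)*c) := by
    intro c
    rw [← inv_pow, ginv, ← pow_mul]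
  have gpow_congr : ∀ a b : ℕ, a ≡ b [MOD m+3] → g^a = g^b := by
    intro a b hab
    rw [pow_eq_pow_iff_modEq, gorder]
    exact hab
  -- the dihedral relation
  have hrel : h * g * h = g⁻¹ := by
    refine eq_inv_of_mul_eq_one_left ?_
    ext x
    simp [Perm.mul_apply, happly, gapply]
    ring
  have sandwich : ∀ a b : Perm (Fin (m+3)), (h*a*h) * (h*b*h) = h*(a*b)*h := by
    intro a b
    have : (h*a*h) * (h*b*h) = h*a*(h*h)*b*h := by group
    rw [this, hh2, mul_one]
    group
  have hconj : ∀ c : ℕ, h * g^c * h = (g^c)⁻¹ := by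
    intro c
    induction c with
    | zero => rw [pow_zero, mul_one, hh2, inv_one]
    | succ c ih =>
      have : h * g^(c+1) * h = (h*g^c*h) * (h*g*h) := by
        rw [sandwich, pow_succ]
      rw [this, ih, hrel, ← mul_inv_rev, ← pow_succ']
  have key : ∀ b c : ℕ, h^b * g^c = (if b % 2 = 0 then g^c else (g^c)⁻¹) * h^b := by
    intro b c
    rcases Nat.even_or_odd b with hb | hb
    · rw [if_pos (Nat.even_iff.mp hb), hpow_even b (Nat.even_iff.mp hb), one_mul, mul_one]
    · rw [if_neg (by rw [Nat.odd_iff.mp hb]; omega), hpow_odd b (Nat.odd_iff.mp hb)]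
      calc h * g^c = h * g^c * (h * h) := by rw [hh2, mul_one]
        _ = (h * g^c * h) * h := (mul_assoc _ _ _).symm
        _ = (g^c)⁻¹ * h := by rw [hconj]
  -- normal form for the dihedral group
  have memD : ∀ x ∈ Subgroup.closure {g, h}, ∃ a b : ℕ, x = g^a * h^b := by
    intro x hx
    induction hx using Subgroup.closure_induction with
    | mem y hy =>
      rcases hy with rfl | rfl
      · exact ⟨1, 0, by simp⟩
      · exact ⟨0, 1, by simp⟩
    | one => exact ⟨0, 0, by simp⟩
    | mul y z hy hz ihy ihz =>
      obtain ⟨a, b, rfl⟩ := ihy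
      obtain ⟨c, d, rfl⟩ := ihz
      have e : g^a * h^b * (g^c * h^d) = g^a * ((h^b * g^c) * h^d) := by group
      by_cases hb : b % 2 = 0
      · refine ⟨a + c, b + d, ?_⟩
        rw [e, key, if_pos hb, pow_add, pow_add]
        group
      · refine ⟨a + (m+2)*c, b + d, ?_⟩
        rw [e, key, if_neg hb, gpow_inv, pow_add, pow_add]
        group
    | inv y hy ihy =>
      obtain ⟨a, b, rfl⟩ := ihy
      have e : (g^a * h^b)⁻¹ = h^b * g^((m+2)*a) := by
        rw [mul_inv_rev, ← inv_pow, hinv, gpow_inv]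
      by_cases hb : b % 2 = 0
      · exact ⟨(m+2)*a, b, by rw [e, key, if_pos hb]⟩
      · refine ⟨(m+2)*((m+2)*a), b, ?_⟩
        rw [e, key, if_neg hb, gpow_inv]
  -- every g^j * h^j lies in K
  have memB : ∀ j : ℕ, g^j * h^j ∈ Subgroup.closure {g^2, g*h} := by
    intro j
    obtain ⟨t, rfl | rfl⟩ := Nat.even_or_odd' j
    · rw [hpow_even _ (by omega), mul_one, pow_mul]
      exact pow_mem (Subgroup.subset_closure (Set.mem_insert _ _)) t
    · have e : g^(2*t+1) * h = (g^2)^t * (g*h) := by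
        rw [pow_succ, pow_mul, mul_assoc]
      rw [hpow_odd _ (by omega), e]
      exact mul_mem (pow_mem (Subgroup.subset_closure (Set.mem_insert _ _)) t)
        (Subgroup.subset_closure (Set.mem_insert_of_mem _ rfl))
  -- signs
  have sgn_g : Equiv.Perm.sign g = -1 := by
    rw [hgdef, show (m+3) = (m+2)+1 from rfl, sign_finRotate]
    exact Odd.neg_one_pow (Nat.odd_iff.mpr (by omega))
  have sgn_h : Equiv.Perm.sign h = -1 := by
    rw [hhdef, show (m+3) = (m+2)+1 from rfl, sign_revPerm_aux]
    exact Odd.neg_one_pow (Nat.odd_iff.mpr (by omega))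
  -- Part 1
  have part1 : Subgroup.closure {g, h} ⊓ alternatingGroup (Fin (m+3))
      = Subgroup.closure {g^2, g*h} := by
    refine le_antisymm ?_ ?_
    · intro x hx
      rw [Subgroup.mem_inf] at hx
      obtain ⟨a, b, rfl⟩ := memD x hx.1
      have hs := (Equiv.Perm.mem_alternatingGroup).mp hx.2
      rw [map_mul, map_pow, map_pow, sgn_g, sgn_h] at hs
      have hab : a ≡ b [MOD 2] := by
        rcases Nat.even_or_odd a with ha | ha <;> rcases Nat.even_or_odd b with hb | hb
        · rw [Nat.even_iff] at ha hb; unfold Nat.ModEq; omega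
        · rw [ha.neg_one_pow, hb.neg_one_pow, one_mul] at hs
          exact absurd hs (by decide)
        · rw [ha.neg_one_pow, hb.neg_one_pow, mul_one] at hs
          exact absurd hs (by decide)
        · rw [Nat.odd_iff] at ha hb; unfold Nat.ModEq; omega
      rw [hpow_congr b a hab.symm]
      exact memB a
    · rw [Subgroup.closure_le]
      rintro y (rfl | rfl)
      · rw [SetLike.mem_coe, Subgroup.mem_inf]
        refine ⟨pow_mem (Subgroup.subset_closure (Set.mem_insert _ _)) 2, ?_⟩
        rw [Equiv.Perm.mem_alternatingGroup, map_pow, sgn_g]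
        decide
      · rw [SetLike.mem_coe, Subgroup.mem_inf]
        refine ⟨mul_mem (Subgroup.subset_closure (Set.mem_insert _ _))
          (Subgroup.subset_closure (Set.mem_insert_of_mem _ rfl)), ?_⟩
        rw [Equiv.Perm.mem_alternatingGroup, map_mul, sgn_g, sgn_h]
        decide
  refine ⟨part1, ?_⟩
  -- normal form for K
  have memK : ∀ x ∈ Subgroup.closure {g^2, g*h}, ∃ j : ℕ, x = g^j * h^j := by
    intro x hx
    induction hx using Subgroup.closure_induction with
    | mem y hy =>
      rcases hy with rfl | rfl
      · exact ⟨2, by rw [hpow_even 2 rfl, mul_one]⟩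
      · exact ⟨1, by rw [pow_one, pow_one]⟩
    | one => exact ⟨0, by simp⟩
    | mul y z hy hz ihy ihz =>
      obtain ⟨a, rfl⟩ := ihy
      obtain ⟨b, rfl⟩ := ihz
      have e : g^a * h^a * (g^b * h^b) = g^a * ((h^a * g^b) * h^b) := by group
      by_cases ha : a % 2 = 0
      · refine ⟨a + b, ?_⟩
        rw [e, key, if_pos ha, pow_add, pow_add]
        group
      · refine ⟨a + (m+2)*b, ?_⟩
        have hmb : b ≡ (m+2)*b [MOD 2] := by
          have h1 : (1:ℕ) ≡ m+2 [MOD 2] := by unfold Nat.ModEq; omega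
          simpa using h1.mul_right b
        have hpar : a + b ≡ a + (m+2)*b [MOD 2] := Nat.ModEq.add_left a hmb
        rw [e, key, if_neg ha, gpow_inv, hpow_congr _ _ hpar.symm, pow_add, pow_add]
        group
    | inv y hy ihy =>
      obtain ⟨a, rfl⟩ := ihy
      by_cases ha : a % 2 = 0
      · refine ⟨(m+2)*a, ?_⟩
        rw [hpow_even a ha, mul_one, gpow_inv, hpow_even ((m+2)*a) (by
          obtain ⟨t, rfl⟩ : ∃ t, a = 2*t := ⟨a/2, by omega⟩
          rw [show (m+2)*(2*t) = 2*((m+2)*t) by ring]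
          omega), mul_one]
      · refine ⟨a, ?_⟩
        have e1 : (g^a * h^a) * (g^a * h^a) = 1 := by
          have e : g^a * h^a * (g^a * h^a) = g^a * (h^a * g^a) * h^a := by group
          rw [e, key a a, if_neg ha]
          have e2 : g^a * ((g^a)⁻¹ * h^a) * h^a = h^a * h^a := by group
          rw [e2, ← pow_add]
          exact hpow_even _ (by omega)
        rw [inv_eq_of_mul_eq_one_left e1]
  -- the parametrization
  set ψ : Fin (m+3) → Perm (Fin (m+3)) := fun i => g^(i.val) * h^(i.val) with hψ
  have hred : ∀ j : ℕ, g^j * h^j = ψ ⟨j % (m+3), Nat.mod_lt _ (by omega)⟩ := by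
    intro j
    have hg' : g^j = g^(j % (m+3)) := gpow_congr _ _ (Nat.mod_modEq j (m+3)).symm
    have hpar : j ≡ j % (m+3) [MOD 2] := by
      have hdvd : (2:ℕ) ∣ (m+3) := by omega
      have h0 : (m+3)*(j/(m+3)) ≡ 0 [MOD 2] :=
        (Nat.modEq_zero_iff_dvd).mpr (hdvd.mul_right _)
      calc j = j % (m+3) + (m+3)*(j/(m+3)) := by rw [Nat.mod_add_div]
        _ ≡ j % (m+3) + 0 [MOD 2] := Nat.ModEq.add_left _ h0
        _ = j % (m+3) := by omega
    have hh' : h^j = h^(j % (m+3)) := hpow_congr _ _ hpar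
    rw [hg', hh']
  have hKset : ((Subgroup.closure {g^2, g*h} : Subgroup (Perm (Fin (m+3)))) : Set (Perm (Fin (m+3))))
      = Set.range ψ := by
    ext x
    constructor
    · intro hx
      obtain ⟨j, rfl⟩ := memK x hx
      exact ⟨_, (hred j).symm⟩
    · rintro ⟨i, rfl⟩
      exact memB i.val
  have hinj : Function.Injective ψ := by
    intro a b heq
    simp only [hψ] at heq
    by_cases hpa : a.val % 2 = 0 <;> by_cases hpb : b.val % 2 = 0
    · rw [hpow_even _ hpa, hpow_even _ hpb, mul_one, mul_one] at heq
      have hmod : (a:ℕ) ≡ (b:ℕ) [MOD m+3] := by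
        have := pow_eq_pow_iff_modEq.mp heq
        rwa [gorder] at this
      exact Fin.ext (Nat.ModEq.eq_of_lt_of_lt hmod a.isLt b.isLt)
    · rw [hpow_even _ hpa, mul_one, hpow_odd _ (by omega)] at heq
      exfalso
      have e0 := congrArg (fun σ : Perm (Fin (m+3)) => σ 0) heq
      have e1 := congrArg (fun σ : Perm (Fin (m+3)) => σ 1) heq
      simp only [Perm.mul_apply] at e0 e1
      rw [gpow, happly, gpow] at e0 e1
      have h20 : (2 : Fin (m+3)) = 0 := by linear_combination e1 - e0
      have := congrArg Fin.val h20
      rw [Fin.val_zero] at this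
      rw [show ((2 : Fin (m+3)) : ℕ) = 2 % (m+3) from rfl,
        Nat.mod_eq_of_lt (by omega)] at this
      omega
    · rw [hpow_even _ hpb, mul_one, hpow_odd _ (by omega)] at heq
      exfalso
      have e0 := congrArg (fun σ : Perm (Fin (m+3)) => σ 0) heq
      have e1 := congrArg (fun σ : Perm (Fin (m+3)) => σ 1) heq
      simp only [Perm.mul_apply] at e0 e1
      rw [gpow, happly, gpow] at e0 e1
      have h20 : (2 : Fin (m+3)) = 0 := by linear_combination e0 - e1
      have := congrArg Fin.val h20
      rw [Fin.val_zero] at this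
      rw [show ((2 : Fin (m+3)) : ℕ) = 2 % (m+3) from rfl,
        Nat.mod_eq_of_lt (by omega)] at this
      omega
    · rw [hpow_odd _ (by omega), hpow_odd _ (by omega)] at heq
      have heq' : g^(a.val) = g^(b.val) := mul_right_cancel heq
      have hmod : (a:ℕ) ≡ (b:ℕ) [MOD m+3] := by
        have := pow_eq_pow_iff_modEq.mp heq'
        rwa [gorder] at this
      exact Fin.ext (Nat.ModEq.eq_of_lt_of_lt hmod a.isLt b.isLt)
  calc Nat.card ↥(Subgroup.closure {g, h} ⊓ alternatingGroup (Fin (m+3)))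
      = Nat.card ↥(Subgroup.closure {g^2, g*h}) := by rw [part1]
    _ = Nat.card ↥(Set.range ψ) := Nat.card_congr (Equiv.setCongr hKset)
    _ = m + 3 := by rw [Nat.card_range_of_injective hinj, Nat.card_eq_fintype_card, Fintype.card_fin]
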